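/- Fix reals M, x₂, L, u₂ with x₂ < L and u₂ > −M. For 0 ≤ δ < L − x₂ define g_δ : ℝ → ℝ by g_δ(v) := p_{L−x₂−δ}(u₂ − v) − p_{L−x₂−δ}(v + u₂ + 2M) for v > −M, and g_δ(v) := 0 for v ≤ −M. Then for every δ₀ ∈ (0, L − x₂): (i) each g_δ with 0 ≤ δ ≤ δ₀ is continuous on ℝ and the family (g_δ)_{0≤δ≤δ₀} is uniformly bounded; (ii) g_δ converges uniformly on ℝ to g_0 as δ ↘ 0; (iii) the restriction of each g_δ to [−M, ∞) is continuously differentiable (derivative taken within [−M,∞)), and these derivatives converge uniformly on [−M, ∞), as δ ↘ 0, to the function v ↦ −p'_{L−x₂}(u₂ − v) − p'_{L−x₂}(v + u₂ + 2M). -/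

import Mathlib

open Set Filter

/-- The heat kernel `p_ℓ(u) = (4πℓ)^{-1/2} exp(-u²/(4ℓ))`, the transition density of
a Brownian motion of rate two. -/
noncomputable def heatKernel (ℓ u : ℝ) : ℝ :=
  (Real.sqrt (4 * Real.pi * ℓ))⁻¹ * Real.exp (-u ^ 2 / (4 * ℓ))

/-! ### Auxiliary lemmas -/

/-- The spatial derivative of the heat kernel. -/
noncomputable def hkD (s u : ℝ) : ℝ := -(u * (2 * s)⁻¹) * heatKernel s u

lemma hk_hasDerivAt {s : ℝ} (hs : 0 < s) (u : ℝ) :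
    HasDerivAt (heatKernel s) (hkD s u) u := by
  have h1 : HasDerivAt (fun u : ℝ => -u ^ 2 / (4 * s)) (-(2 * u) / (4 * s)) u := by
    simpa using ((hasDerivAt_pow 2 u).neg.div_const (4 * s))
  have h2 := (h1.exp).const_mul (Real.sqrt (4 * Real.pi * s))⁻¹
  have h3 : HasDerivAt (heatKernel s)
      ((Real.sqrt (4 * Real.pi * s))⁻¹ * (Real.exp (-u ^ 2 / (4 * s)) * (-(2 * u) / (4 * s)))) u := h2
  convert h3 using 1
  unfold hkD heatKernel
  have : (2 * s) ≠ 0 := by positivity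
  field_simp
  ring

lemma exp_neg_le_one' {y : ℝ} (hy : 0 ≤ y) : Real.exp (-y) ≤ 1 := by
  rw [← Real.exp_zero]; exact Real.exp_le_exp.2 (by linarith)

lemma mul_exp_neg_le_one {y : ℝ} (hy : 0 ≤ y) : y * Real.exp (-y) ≤ 1 := by
  have h1 : Real.exp y * Real.exp (-y) = 1 := by rw [← Real.exp_add]; simp
  have h2 : y + 1 ≤ Real.exp y := Real.add_one_le_exp y
  nlinarith [Real.exp_pos (-y)]

lemma exp_sub_exp_le {y x : ℝ} (hyx : y ≤ x) :
    Real.exp (-y) - Real.exp (-x) ≤ Real.exp (-y) * (x - y) := by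
  have h1 : Real.exp (-x) = Real.exp (-y) * Real.exp (y - x) := by
    rw [← Real.exp_add]; ring_nf
  have h2 : (y - x) + 1 ≤ Real.exp (y - x) := Real.add_one_le_exp _
  nlinarith [Real.exp_pos (-y)]

lemma abs_mul_exp_le {c : ℝ} (hc : 0 < c) (u : ℝ) :
    |u| * Real.exp (-u ^ 2 / c) ≤ c / 4 + 1 := by
  have h1 : Real.exp (u ^ 2 / c) * Real.exp (-u ^ 2 / c) = 1 := by
    rw [← Real.exp_add]; ring_nf; exact Real.exp_zero
  have h2 : u ^ 2 / c + 1 ≤ Real.exp (u ^ 2 / c) := Real.add_one_le_exp _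
  have h3 : (0:ℝ) < Real.exp (-u ^ 2 / c) := Real.exp_pos _
  have h5 : (u ^ 2 / c + 1) * Real.exp (-u ^ 2 / c) ≤ 1 := by nlinarith
  have h5' : (u ^ 2 + c) * Real.exp (-u ^ 2 / c) ≤ c := by
    have := mul_le_mul_of_nonneg_left h5 hc.le
    have he : c * ((u ^ 2 / c + 1) * Real.exp (-u ^ 2 / c))
        = (u ^ 2 + c) * Real.exp (-u ^ 2 / c) := by field_simp
    linarith [he ▸ this]
  have h4 : c * |u| ≤ (c / 4 + 1) * (c + u ^ 2) := by
    nlinarith [sq_nonneg (|u| - 2), sq_abs u, hc.le]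
  have h6 : (c / 4 + 1) * ((u ^ 2 + c) * Real.exp (-u ^ 2 / c)) ≤ (c / 4 + 1) * c :=
    mul_le_mul_of_nonneg_left h5' (by positivity)
  have h7 : c * (|u| * Real.exp (-u ^ 2 / c)) ≤ c * (c / 4 + 1) := by
    nlinarith [mul_le_mul_of_nonneg_right h4 h3.le]
  nlinarith

lemma hk_diff_bound {ℓ₀ s ℓ : ℝ} (h0 : 0 < ℓ₀) (hs : ℓ₀ ≤ s) (hsl : s ≤ ℓ) (u : ℝ) :
    |heatKernel s u - heatKernel ℓ u| ≤
      |(Real.sqrt (4 * Real.pi * s))⁻¹ - (Real.sqrt (4 * Real.pi * ℓ))⁻¹|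
        + (Real.sqrt (4 * Real.pi * ℓ))⁻¹ * ((ℓ - s) / ℓ₀) := by
  have hspos : 0 < s := lt_of_lt_of_le h0 hs
  have hlpos : 0 < ℓ := lt_of_lt_of_le hspos hsl
  set as := (Real.sqrt (4 * Real.pi * s))⁻¹ with has
  set al := (Real.sqrt (4 * Real.pi * ℓ))⁻¹ with hal
  have hal0 : 0 ≤ al := by rw [hal]; positivity
  set x := u ^ 2 / (4 * s) with hx
  set y := u ^ 2 / (4 * ℓ) with hy
  have hx0 : 0 ≤ x := by positivity
  have hy0 : 0 ≤ y := by positivity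
  have hyx : y ≤ x := by
    rw [hx, hy]
    apply div_le_div_of_nonneg_left (sq_nonneg u) (by positivity) (by linarith)
  have hE : heatKernel s u - heatKernel ℓ u
      = (as - al) * Real.exp (-x) + al * (Real.exp (-x) - Real.exp (-y)) := by
    unfold heatKernel
    rw [show -u ^ 2 / (4 * s) = -x by rw [hx]; ring,
        show -u ^ 2 / (4 * ℓ) = -y by rw [hy]; ring]
    ring
  have key : Real.exp (-y) - Real.exp (-x) ≤ (ℓ - s) / ℓ₀ := by
    have h1 := exp_sub_exp_le hyx
    have h2 : x - y = y * ((ℓ - s) / s) := by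
      rw [hx, hy]; field_simp
    have h3 : y * Real.exp (-y) ≤ 1 := mul_exp_neg_le_one hy0
    have h4 : (ℓ - s) / s ≤ (ℓ - s) / ℓ₀ := by gcongr
    have h5 : Real.exp (-y) * (x - y) ≤ (ℓ - s) / s := by
      rw [h2]
      calc Real.exp (-y) * (y * ((ℓ - s) / s)) = (y * Real.exp (-y)) * ((ℓ - s) / s) := by ring
        _ ≤ 1 * ((ℓ - s) / s) := by
            exact mul_le_mul_of_nonneg_right h3 (div_nonneg (by linarith) hspos.le)
        _ = (ℓ - s) / s := one_mul _
    linarith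
  rw [hE]
  calc |(as - al) * Real.exp (-x) + al * (Real.exp (-x) - Real.exp (-y))|
      ≤ |(as - al) * Real.exp (-x)| + |al * (Real.exp (-x) - Real.exp (-y))| := abs_add_le _ _
    _ ≤ |as - al| + al * ((ℓ - s) / ℓ₀) := by
        gcongr ?_ + ?_
        · rw [abs_mul]
          have : |Real.exp (-x)| ≤ 1 := by
            rw [abs_of_pos (Real.exp_pos _)]; exact exp_neg_le_one' hx0
          nlinarith [abs_nonneg (as - al)]
        · rw [abs_mul, abs_of_nonneg hal0]
          apply mul_le_mul_of_nonneg_left _ hal0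
          rw [abs_sub_comm, abs_of_nonneg (by linarith [Real.exp_le_exp.2 (neg_le_neg hyx)] :
            (0:ℝ) ≤ Real.exp (-y) - Real.exp (-x))]
          exact key

lemma hkD_diff_bound {ℓ₀ s ℓ : ℝ} (h0 : 0 < ℓ₀) (hs : ℓ₀ ≤ s) (hsl : s ≤ ℓ) (u : ℝ) :
    |hkD s u - hkD ℓ u| ≤
      |(Real.sqrt (4 * Real.pi * s))⁻¹ * (2 * s)⁻¹
          - (Real.sqrt (4 * Real.pi * ℓ))⁻¹ * (2 * ℓ)⁻¹| * (ℓ + 1)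
        + (Real.sqrt (4 * Real.pi * ℓ))⁻¹ * (2 * ℓ)⁻¹ * (2 * (2 * ℓ + 1)) * ((ℓ - s) / ℓ₀) := by
  have hspos : 0 < s := lt_of_lt_of_le h0 hs
  have hlpos : 0 < ℓ := lt_of_lt_of_le hspos hsl
  set bs := (Real.sqrt (4 * Real.pi * s))⁻¹ * (2 * s)⁻¹ with hbs
  set bl := (Real.sqrt (4 * Real.pi * ℓ))⁻¹ * (2 * ℓ)⁻¹ with hbl
  have hbl0 : 0 ≤ bl := by rw [hbl]; positivity
  set x := u ^ 2 / (4 * s) with hx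
  set y := u ^ 2 / (4 * ℓ) with hy
  have hx0 : 0 ≤ x := by positivity
  have hy0 : 0 ≤ y := by positivity
  have hyx : y ≤ x := by
    rw [hx, hy]
    apply div_le_div_of_nonneg_left (sq_nonneg u) (by positivity) (by linarith)
  have hExy : Real.exp (-x) ≤ Real.exp (-y) := Real.exp_le_exp.2 (by linarith)
  have hE : hkD s u - hkD ℓ u
      = -((bs - bl) * (u * Real.exp (-x)) + bl * (u * (Real.exp (-x) - Real.exp (-y)))) := by
    unfold hkD heatKernel
    rw [show -u ^ 2 / (4 * s) = -x by rw [hx]; ring,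
        show -u ^ 2 / (4 * ℓ) = -y by rw [hy]; ring]
    ring
  have hu1 : |u| * Real.exp (-x) ≤ ℓ + 1 := by
    have h1 : |u| * Real.exp (-y) ≤ ℓ + 1 := by
      have := abs_mul_exp_le (show (0:ℝ) < 4 * ℓ by positivity) u
      rw [show -u ^ 2 / (4 * ℓ) = -y by rw [hy]; ring] at this
      linarith
    nlinarith [abs_nonneg u]
  have hu2 : |u| * (y * Real.exp (-y)) ≤ 2 * (2 * ℓ + 1) := by
    have hsplit : Real.exp (-y) = Real.exp (-(y/2)) * Real.exp (-(y/2)) := by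
      rw [← Real.exp_add]; ring_nf
    have ha : |u| * Real.exp (-(y/2)) ≤ 2 * ℓ + 1 := by
      have := abs_mul_exp_le (show (0:ℝ) < 8 * ℓ by positivity) u
      rw [show -u ^ 2 / (8 * ℓ) = -(y/2) by rw [hy]; ring] at this
      linarith
    have hb : y * Real.exp (-(y/2)) ≤ 2 := by
      have := mul_exp_neg_le_one (show (0:ℝ) ≤ y/2 by linarith)
      linarith
    calc |u| * (y * Real.exp (-y))
        = (|u| * Real.exp (-(y/2))) * (y * Real.exp (-(y/2))) := by rw [hsplit]; ring
      _ ≤ (2 * ℓ + 1) * 2 := by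
          apply mul_le_mul ha hb (by positivity) (by positivity)
      _ = 2 * (2 * ℓ + 1) := by ring
  have key : |u| * (Real.exp (-y) - Real.exp (-x)) ≤ (2 * (2 * ℓ + 1)) * ((ℓ - s) / ℓ₀) := by
    have h1 := exp_sub_exp_le hyx
    have h2 : x - y = y * ((ℓ - s) / s) := by rw [hx, hy]; field_simp
    have h4 : (ℓ - s) / s ≤ (ℓ - s) / ℓ₀ := by gcongr
    have h5 : |u| * (Real.exp (-y) - Real.exp (-x))
        ≤ (|u| * (y * Real.exp (-y))) * ((ℓ - s) / s) := by
      have := mul_le_mul_of_nonneg_left h1 (abs_nonneg u)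
      rw [h2] at this
      nlinarith [abs_nonneg u]
    have h6 : (|u| * (y * Real.exp (-y))) * ((ℓ - s) / s)
        ≤ (2 * (2 * ℓ + 1)) * ((ℓ - s) / ℓ₀) := by
      apply mul_le_mul hu2 h4 (div_nonneg (by linarith) hspos.le)
      positivity
    linarith
  rw [hE, abs_neg]
  calc |(bs - bl) * (u * Real.exp (-x)) + bl * (u * (Real.exp (-x) - Real.exp (-y)))|
      ≤ |(bs - bl) * (u * Real.exp (-x))|
        + |bl * (u * (Real.exp (-x) - Real.exp (-y)))| := abs_add_le _ _
    _ ≤ |bs - bl| * (ℓ + 1) + bl * (2 * (2 * ℓ + 1)) * ((ℓ - s) / ℓ₀) := by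
        gcongr ?_ + ?_
        · rw [abs_mul, abs_mul]
          apply mul_le_mul_of_nonneg_left _ (abs_nonneg (bs - bl))
          rw [abs_of_pos (Real.exp_pos _)]
          exact hu1
        · rw [abs_mul, abs_of_nonneg hbl0, abs_mul, abs_sub_comm,
            abs_of_nonneg (by linarith : (0:ℝ) ≤ Real.exp (-y) - Real.exp (-x))]
          calc bl * (|u| * (Real.exp (-y) - Real.exp (-x)))
              ≤ bl * ((2 * (2 * ℓ + 1)) * ((ℓ - s) / ℓ₀)) :=
                mul_le_mul_of_nonneg_left key hbl0
            _ = bl * (2 * (2 * ℓ + 1)) * ((ℓ - s) / ℓ₀) := by ring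

lemma tendstoUniformly_of_bound {F : ℝ → ℝ → ℝ} {f : ℝ → ℝ} {B : ℝ → ℝ}
    (h1 : ∀ᶠ δ in nhdsWithin 0 (Ioi 0), ∀ u, |f u - F δ u| ≤ B δ)
    (h2 : Tendsto B (nhdsWithin 0 (Ioi 0)) (nhds 0)) :
    TendstoUniformly F f (nhdsWithin 0 (Ioi 0)) := by
  rw [Metric.tendstoUniformly_iff]
  intro ε hε
  filter_upwards [h1, h2.eventually_lt_const hε] with δ hb hε' u
  rw [Real.dist_eq]
  exact lt_of_le_of_lt (hb u) hε'

lemma hk_cont (s : ℝ) : Continuous (fun u => heatKernel s u) := by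
  unfold heatKernel; fun_prop

lemma hk_abs_le {ℓ₀ s : ℝ} (h0 : 0 < ℓ₀) (hs : ℓ₀ ≤ s) (u : ℝ) :
    |heatKernel s u| ≤ (Real.sqrt (4 * Real.pi * ℓ₀))⁻¹ := by
  have hspos : 0 < s := lt_of_lt_of_le h0 hs
  have h1 : 0 ≤ heatKernel s u := by unfold heatKernel; positivity
  rw [abs_of_nonneg h1]
  unfold heatKernel
  have h2 : Real.exp (-u ^ 2 / (4 * s)) ≤ 1 := by
    rw [show -u ^ 2 / (4 * s) = -(u ^ 2 / (4 * s)) by ring, ← Real.exp_zero]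
    apply Real.exp_le_exp.2
    have : (0:ℝ) ≤ u ^ 2 / (4 * s) := by positivity
    linarith
  have h3 : (Real.sqrt (4 * Real.pi * s))⁻¹ ≤ (Real.sqrt (4 * Real.pi * ℓ₀))⁻¹ := by
    apply inv_anti₀ (Real.sqrt_pos.2 (by positivity))
    apply Real.sqrt_le_sqrt
    nlinarith [Real.pi_pos]
  calc (Real.sqrt (4 * Real.pi * s))⁻¹ * Real.exp (-u ^ 2 / (4 * s))
      ≤ (Real.sqrt (4 * Real.pi * s))⁻¹ * 1 :=
        mul_le_mul_of_nonneg_left h2 (by positivity)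
    _ ≤ (Real.sqrt (4 * Real.pi * ℓ₀))⁻¹ := by rw [mul_one]; exact h3

lemma contA {ℓ : ℝ} (hℓ : 0 < ℓ) :
    ContinuousAt (fun δ : ℝ => (Real.sqrt (4 * Real.pi * (ℓ - δ)))⁻¹) 0 := by
  apply ContinuousAt.inv₀
  · exact (Real.continuous_sqrt.comp (by fun_prop)).continuousAt
  · apply ne_of_gt
    apply Real.sqrt_pos.2
    have : (0:ℝ) < ℓ - 0 := by linarith
    nlinarith [Real.pi_pos]

lemma contB {ℓ : ℝ} (hℓ : 0 < ℓ) :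
    ContinuousAt (fun δ : ℝ => (Real.sqrt (4 * Real.pi * (ℓ - δ)))⁻¹ * (2 * (ℓ - δ))⁻¹) 0 := by
  apply ContinuousAt.mul (contA hℓ)
  apply ContinuousAt.inv₀ (by fun_prop)
  have : (0:ℝ) < 2 * (ℓ - 0) := by linarith
  exact ne_of_gt this

lemma tendsto_pos_of_contAt {φ : ℝ → ℝ} (hφ : ContinuousAt φ 0) (hφ0 : φ 0 = 0) :
    Tendsto φ (nhdsWithin 0 (Ioi 0)) (nhds 0) := by
  have := hφ.tendsto.mono_left (nhdsWithin_le_nhds (s := Ioi 0))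
  rwa [hφ0] at this

lemma B1_tendsto {ℓ ℓ₀ : ℝ} (hℓ : 0 < ℓ) (hℓ₀ : 0 < ℓ₀) :
    Tendsto (fun δ : ℝ => 2 * (|(Real.sqrt (4 * Real.pi * (ℓ - δ)))⁻¹
        - (Real.sqrt (4 * Real.pi * ℓ))⁻¹|
      + (Real.sqrt (4 * Real.pi * ℓ))⁻¹ * (δ / ℓ₀)))
      (nhdsWithin 0 (Ioi 0)) (nhds 0) := by
  apply tendsto_pos_of_contAt
  · exact ContinuousAt.mul continuousAt_const
      ((((contA hℓ).sub continuousAt_const).abs).add (by fun_prop))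
  · norm_num

lemma B2_tendsto {ℓ ℓ₀ : ℝ} (hℓ : 0 < ℓ) (hℓ₀ : 0 < ℓ₀) :
    Tendsto (fun δ : ℝ => 2 * (|(Real.sqrt (4 * Real.pi * (ℓ - δ)))⁻¹ * (2 * (ℓ - δ))⁻¹
        - (Real.sqrt (4 * Real.pi * ℓ))⁻¹ * (2 * ℓ)⁻¹| * (ℓ + 1)
      + (Real.sqrt (4 * Real.pi * ℓ))⁻¹ * (2 * ℓ)⁻¹ * (2 * (2 * ℓ + 1)) * (δ / ℓ₀)))
      (nhdsWithin 0 (Ioi 0)) (nhds 0) := by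
  apply tendsto_pos_of_contAt
  · exact ContinuousAt.mul continuousAt_const
      (((((contB hℓ).sub continuousAt_const).abs).mul continuousAt_const).add (by fun_prop))
  · norm_num

/-- The Gaussian part of Lemma 4.4 (lem:f_g): the reflection-principle functions
`g_δ(v) = p_{L-x₂-δ}(u₂-v) - p_{L-x₂-δ}(v+u₂+2M)` for `v > -M`, `g_δ(v) = 0` for
`v ≤ -M`, are continuous and uniformly bounded, converge uniformly to `g₀` as `δ ↘ 0`,
and on `[-M, ∞)` are continuously differentiable with derivatives converging uniformly,
as `δ ↘ 0`, to `v ↦ -p'_{L-x₂}(u₂-v) - p'_{L-x₂}(v+u₂+2M)`. -/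
theorem reflection_kernel_properties
    (M x₂ L u₂ : ℝ) (hx : x₂ < L) (hu : -M < u₂)
    (g : ℝ → ℝ → ℝ)
    (hg : ∀ δ v, g δ v =
      if -M < v then
        heatKernel (L - x₂ - δ) (u₂ - v) - heatKernel (L - x₂ - δ) (v + u₂ + 2 * M)
      else 0)
    (δ₀ : ℝ) (hδ₀ : δ₀ ∈ Ioo 0 (L - x₂)) :
    ((∀ δ ∈ Icc (0 : ℝ) δ₀, Continuous (g δ)) ∧
        ∃ B : ℝ, ∀ δ ∈ Icc (0 : ℝ) δ₀, ∀ v : ℝ, |g δ v| ≤ B) ∧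
      TendstoUniformly (fun δ => g δ) (g 0) (nhdsWithin 0 (Ioi 0)) ∧
      ∃ g' : ℝ → ℝ → ℝ,
        (∀ δ ∈ Icc (0 : ℝ) δ₀, ∀ v ∈ Ici (-M),
          HasDerivWithinAt (g δ) (g' δ v) (Ici (-M)) v) ∧
        (∀ δ ∈ Icc (0 : ℝ) δ₀, ContinuousOn (g' δ) (Ici (-M))) ∧
        TendstoUniformlyOn (fun δ => g' δ)
          (fun v => -deriv (heatKernel (L - x₂)) (u₂ - v)
            - deriv (heatKernel (L - x₂)) (v + u₂ + 2 * M))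
          (nhdsWithin 0 (Ioi 0)) (Ici (-M)) := by
  obtain ⟨hδ₀pos, hδ₀lt⟩ := hδ₀
  have hℓ : (0:ℝ) < L - x₂ := sub_pos.2 hx
  have hℓ₀ : (0:ℝ) < L - x₂ - δ₀ := sub_pos.2 hδ₀lt
  set K : ℝ → ℝ → ℝ := fun δ v =>
    heatKernel (L - x₂ - δ) (u₂ - v) - heatKernel (L - x₂ - δ) (v + u₂ + 2 * M) with hK
  have hgK : ∀ δ v, g δ v = K δ (max (-M) v) := by
    intro δ v
    rw [hg]
    rcases le_or_gt v (-M) with hv | hv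
    · rw [if_neg (not_lt.2 hv), max_eq_left hv]
      simp only [hK]
      rw [show (-M : ℝ) + u₂ + 2 * M = u₂ - -M by ring, sub_self]
    · rw [if_pos hv, max_eq_right hv.le]
  -- (i) continuity
  have hcont : ∀ δ ∈ Icc (0:ℝ) δ₀, Continuous (g δ) := by
    intro δ _
    have hKc : Continuous fun v => K δ (max (-M) v) := by
      simp only [hK]
      exact ((hk_cont _).comp (by fun_prop)).sub ((hk_cont _).comp (by fun_prop))
    have : g δ = fun v => K δ (max (-M) v) := funext (hgK δ)
    rw [this]; exact hKc
  -- (i) uniform bound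
  have hbdd : ∀ δ ∈ Icc (0:ℝ) δ₀, ∀ v : ℝ,
      |g δ v| ≤ 2 * (Real.sqrt (4 * Real.pi * (L - x₂ - δ₀)))⁻¹ := by
    intro δ hδ v
    rw [hgK]
    simp only [hK]
    have hss : L - x₂ - δ₀ ≤ L - x₂ - δ := by linarith [hδ.2]
    have h1 := hk_abs_le hℓ₀ hss (u₂ - max (-M) v)
    have h2 := hk_abs_le hℓ₀ hss (max (-M) v + u₂ + 2 * M)
    calc |heatKernel (L - x₂ - δ) (u₂ - max (-M) v)
          - heatKernel (L - x₂ - δ) (max (-M) v + u₂ + 2 * M)|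
        ≤ |heatKernel (L - x₂ - δ) (u₂ - max (-M) v)|
          + |heatKernel (L - x₂ - δ) (max (-M) v + u₂ + 2 * M)| := abs_sub _ _
      _ ≤ 2 * (Real.sqrt (4 * Real.pi * (L - x₂ - δ₀)))⁻¹ := by linarith
  -- (ii) uniform convergence of the kernels
  have hKlim : TendstoUniformly K
      (fun v => heatKernel (L - x₂) (u₂ - v) - heatKernel (L - x₂) (v + u₂ + 2 * M))
      (nhdsWithin 0 (Ioi 0)) := by
    apply tendstoUniformly_of_bound
      (B := fun δ => 2 * (|(Real.sqrt (4 * Real.pi * (L - x₂ - δ)))⁻¹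
          - (Real.sqrt (4 * Real.pi * (L - x₂)))⁻¹|
        + (Real.sqrt (4 * Real.pi * (L - x₂)))⁻¹ * (δ / (L - x₂ - δ₀))))
    · filter_upwards [Ioo_mem_nhdsGT
        hδ₀pos] with δ hδ v
      simp only [hK]
      have hss : L - x₂ - δ₀ ≤ L - x₂ - δ := by linarith [hδ.2]
      have hsl : L - x₂ - δ ≤ L - x₂ := by linarith [hδ.1.le]
      have hb1 := hk_diff_bound hℓ₀ hss hsl (u₂ - v)
      have hb2 := hk_diff_bound hℓ₀ hss hsl (v + u₂ + 2 * M)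
      rw [show L - x₂ - (L - x₂ - δ) = δ by ring] at hb1 hb2
      have key : |(heatKernel (L - x₂) (u₂ - v) - heatKernel (L - x₂) (v + u₂ + 2 * M))
            - (heatKernel (L - x₂ - δ) (u₂ - v) - heatKernel (L - x₂ - δ) (v + u₂ + 2 * M))|
          ≤ |heatKernel (L - x₂ - δ) (u₂ - v) - heatKernel (L - x₂) (u₂ - v)|
            + |heatKernel (L - x₂ - δ) (v + u₂ + 2 * M)
              - heatKernel (L - x₂) (v + u₂ + 2 * M)| := by
        rw [show (heatKernel (L - x₂) (u₂ - v) - heatKernel (L - x₂) (v + u₂ + 2 * M))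
            - (heatKernel (L - x₂ - δ) (u₂ - v) - heatKernel (L - x₂ - δ) (v + u₂ + 2 * M))
            = -((heatKernel (L - x₂ - δ) (u₂ - v) - heatKernel (L - x₂) (u₂ - v))
              - (heatKernel (L - x₂ - δ) (v + u₂ + 2 * M)
                - heatKernel (L - x₂) (v + u₂ + 2 * M))) from by ring, abs_neg]
        exact abs_sub _ _
      linarith
    · exact B1_tendsto hℓ hℓ₀
  have hpart2 : TendstoUniformly (fun δ => g δ) (g 0) (nhdsWithin 0 (Ioi 0)) := by
    have e1 : (fun δ => g δ) = fun δ => (K δ) ∘ (fun v => max (-M) v) := by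
      funext δ v; exact hgK δ v
    have e2 : g 0 = (fun v => heatKernel (L - x₂) (u₂ - v)
        - heatKernel (L - x₂) (v + u₂ + 2 * M)) ∘ (fun v => max (-M) v) := by
      funext v
      rw [hgK 0 v]
      simp only [hK, Function.comp_apply]
      norm_num
    rw [e1, e2]
    exact hKlim.comp _
  -- (iii)
  set G' : ℝ → ℝ → ℝ := fun δ v =>
    -hkD (L - x₂ - δ) (u₂ - v) - hkD (L - x₂ - δ) (v + u₂ + 2 * M) with hG'
  refine ⟨⟨hcont, ⟨_, hbdd⟩⟩, hpart2, G', ?_, ?_, ?_⟩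
  · -- derivatives
    intro δ hδ v hv
    have hs : 0 < L - x₂ - δ := by linarith [hδ.2]
    have hd1 : HasDerivAt (fun w => heatKernel (L - x₂ - δ) (u₂ - w))
        (-hkD (L - x₂ - δ) (u₂ - v)) v := by
      have hin : HasDerivAt (fun w : ℝ => u₂ - w) (-1) v := by
        simpa using (hasDerivAt_id' v).const_sub u₂
      have hcomp := (hk_hasDerivAt hs (u₂ - v)).comp v hin
      simpa [Function.comp_def, mul_neg_one] using hcomp
    have hd2 : HasDerivAt (fun w => heatKernel (L - x₂ - δ) (w + u₂ + 2 * M))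
        (hkD (L - x₂ - δ) (v + u₂ + 2 * M)) v := by
      have hin : HasDerivAt (fun w : ℝ => w + u₂ + 2 * M) 1 v := by
        simpa using ((hasDerivAt_id v).add_const u₂).add_const (2 * M)
      have hcomp := (hk_hasDerivAt hs (v + u₂ + 2 * M)).comp v hin
      simpa [Function.comp_def, mul_one] using hcomp
    have hd := hd1.sub hd2
    have hd' : HasDerivAt (K δ) (G' δ v) v := by
      simp only [hK, hG']
      exact hd
    apply (hd'.hasDerivWithinAt).congr
    · intro y hy; rw [hgK δ y, max_eq_right hy]
    · rw [hgK δ v, max_eq_right hv]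
  · -- continuity of derivatives
    intro δ hδ
    apply Continuous.continuousOn
    simp only [hG']
    unfold hkD heatKernel
    fun_prop
  · -- uniform convergence of derivatives
    have hlim_eq : (fun v => -deriv (heatKernel (L - x₂)) (u₂ - v)
          - deriv (heatKernel (L - x₂)) (v + u₂ + 2 * M))
        = fun v => -hkD (L - x₂) (u₂ - v) - hkD (L - x₂) (v + u₂ + 2 * M) := by
      funext v
      rw [(hk_hasDerivAt hℓ (u₂ - v)).deriv, (hk_hasDerivAt hℓ (v + u₂ + 2 * M)).deriv]
    rw [hlim_eq]
    apply TendstoUniformly.tendstoUniformlyOn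
    apply tendstoUniformly_of_bound
      (B := fun δ => 2 * (|(Real.sqrt (4 * Real.pi * (L - x₂ - δ)))⁻¹ * (2 * (L - x₂ - δ))⁻¹
          - (Real.sqrt (4 * Real.pi * (L - x₂)))⁻¹ * (2 * (L - x₂))⁻¹| * ((L - x₂) + 1)
        + (Real.sqrt (4 * Real.pi * (L - x₂)))⁻¹ * (2 * (L - x₂))⁻¹
          * (2 * (2 * (L - x₂) + 1)) * (δ / (L - x₂ - δ₀))))
    · filter_upwards [Ioo_mem_nhdsGT
        hδ₀pos] with δ hδ v
      simp only [hG']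
      have hss : L - x₂ - δ₀ ≤ L - x₂ - δ := by linarith [hδ.2]
      have hsl : L - x₂ - δ ≤ L - x₂ := by linarith [hδ.1.le]
      have hb1 := hkD_diff_bound hℓ₀ hss hsl (u₂ - v)
      have hb2 := hkD_diff_bound hℓ₀ hss hsl (v + u₂ + 2 * M)
      rw [show L - x₂ - (L - x₂ - δ) = δ by ring] at hb1 hb2
      have key : |(-hkD (L - x₂) (u₂ - v) - hkD (L - x₂) (v + u₂ + 2 * M))
            - (-hkD (L - x₂ - δ) (u₂ - v) - hkD (L - x₂ - δ) (v + u₂ + 2 * M))|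
          ≤ |hkD (L - x₂ - δ) (u₂ - v) - hkD (L - x₂) (u₂ - v)|
            + |hkD (L - x₂ - δ) (v + u₂ + 2 * M) - hkD (L - x₂) (v + u₂ + 2 * M)| := by
        rw [show (-hkD (L - x₂) (u₂ - v) - hkD (L - x₂) (v + u₂ + 2 * M))
            - (-hkD (L - x₂ - δ) (u₂ - v) - hkD (L - x₂ - δ) (v + u₂ + 2 * M))
            = (hkD (L - x₂ - δ) (u₂ - v) - hkD (L - x₂) (u₂ - v))
              + (hkD (L - x₂ - δ) (v + u₂ + 2 * M) - hkD (L - x₂) (v + u₂ + 2 * M)) from by ring]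
        exact abs_add_le _ _
      linarith
    · exact B2_tendsto hℓ hℓ₀
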